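/- Let X_1, …, X_k be i.i.d. random variables with values in a finite set U and common distribution p, let p̂ be the empirical distribution, and let U⁺ = {u : p_u > 0}. Then for every δ > 0, P[ d_KL(p̂, p) ≥ δ ] ≤ |U⁺| / (k·δ). -/

import Mathlib

open Finset
open scoped Classical

/-- The empirical distribution of a sample `v = (X_1, …, X_k)` with values in the
finite set `U`: `p̂_u = (1/k)·#{i : X_i = u}`. -/
noncomputable def empDist {U : Type*} [Fintype U] {k : ℕ} (v : Fin k → U) (u : U) : ℝ :=
  ((Finset.univ.filter fun i => v i = u).card : ℝ) / k

lemma sum_prod_eq' {U : Type*} [Fintype U] (k : ℕ) (g : Fin k → U → ℝ) :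
    ∑ v : Fin k → U, ∏ i, g i (v i) = ∏ i, ∑ u, g i u := by
  rw [Finset.prod_univ_sum]
  simp [Fintype.piFinset_univ]

lemma pair_marg' {U : Type*} [Fintype U]
    (p : U → ℝ) (hp1 : ∑ u, p u = 1) (k : ℕ) (i j : Fin k) (u : U) :
    ∑ v : Fin k → U, (∏ m, p (v m)) *
      ((if v i = u then (1:ℝ) else 0) * (if v j = u then 1 else 0)) =
    if i = j then p u else p u ^ 2 := by
  have key : ∀ v : Fin k → U, (∏ m, p (v m)) *
      ((if v i = u then (1:ℝ) else 0) * (if v j = u then 1 else 0)) =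
      ∏ m, (p (v m) * ((if m = i then (if v m = u then (1:ℝ) else 0) else 1)
        * (if m = j then (if v m = u then (1:ℝ) else 0) else 1))) := by
    intro v
    rw [Finset.prod_mul_distrib, Finset.prod_mul_distrib, Finset.prod_ite_eq',
      Finset.prod_ite_eq']
    simp [mul_assoc]
  simp only [key]
  rw [sum_prod_eq' k (fun m x => p x * ((if m = i then (if x = u then (1:ℝ) else 0) else 1)
    * (if m = j then (if x = u then (1:ℝ) else 0) else 1)))]
  have hm : ∀ m : Fin k, (∑ x, p x * ((if m = i then (if x = u then (1:ℝ) else 0) else 1)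
      * (if m = j then (if x = u then (1:ℝ) else 0) else 1))) =
      if m ∈ ({i, j} : Finset (Fin k)) then p u else 1 := by
    intro m
    by_cases hi : m = i <;> by_cases hj : m = j <;>
      simp [hi, hj, hp1, Finset.mem_insert, mul_ite, ite_and]
  simp only [hm]
  rw [Finset.prod_ite_mem, Finset.univ_inter, Finset.prod_const]
  by_cases h : i = j <;> simp [h, Finset.card_insert_of_notMem, Finset.card_pair, h]

lemma momsq {U : Type*} [Fintype U]
    (p : U → ℝ) (hp1 : ∑ u, p u = 1) (k : ℕ) (hk : 0 < k) (u : U) :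
    ∑ v : Fin k → U, (∏ m, p (v m)) * (empDist v u * empDist v u) =
    (k * p u + (k^2 - k) * p u ^ 2) / (k^2 : ℝ) := by
  have hcard : ∀ v : Fin k → U,
      ((Finset.univ.filter fun i => v i = u).card : ℝ)
        = ∑ i : Fin k, (if v i = u then (1:ℝ) else 0) := by
    intro v
    rw [Finset.card_filter]
    push_cast
    simp
  have expand : ∀ v : Fin k → U, (∏ m, p (v m)) * (empDist v u * empDist v u) =
      (∑ i : Fin k, ∑ j : Fin k, (∏ m, p (v m)) *
        ((if v i = u then (1:ℝ) else 0) * (if v j = u then 1 else 0))) / (k^2 : ℝ) := by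
    intro v
    have hk' : (k:ℝ) ≠ 0 := Nat.cast_ne_zero.mpr hk.ne'
    have h2 : (∑ i : Fin k, ∑ j : Fin k, (∏ m, p (v m)) *
        ((if v i = u then (1:ℝ) else 0) * (if v j = u then 1 else 0))) =
        (∏ m, p (v m)) * ((∑ i : Fin k, (if v i = u then (1:ℝ) else 0)) *
          (∑ j : Fin k, (if v j = u then (1:ℝ) else 0))) := by
      rw [Finset.sum_mul_sum]
      simp only [Finset.mul_sum]
    unfold empDist
    rw [hcard, h2]
    ring
  simp only [expand]
  rw [← Finset.sum_div]
  congr 1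
  rw [Finset.sum_comm (γ := Fin k → U)]
  have : ∀ i : Fin k, ∑ v : Fin k → U, ∑ j : Fin k, (∏ m, p (v m)) *
        ((if v i = u then (1:ℝ) else 0) * (if v j = u then 1 else 0)) =
      ∑ j : Fin k, (if i = j then p u else p u ^ 2) := by
    intro i
    rw [Finset.sum_comm]
    exact Finset.sum_congr rfl fun j _ => pair_marg' p hp1 k i j u
  rw [Finset.sum_congr rfl fun i _ => this i]
  have hrow : ∀ i : Fin k, ∑ j : Fin k, (if i = j then p u else p u ^ 2) =
      p u ^ 2 * k + (p u - p u ^ 2) := by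
    intro i
    have : ∀ j : Fin k, (if i = j then p u else p u ^ 2) =
        p u ^ 2 + (if i = j then p u - p u ^ 2 else 0) := by
      intro j; split <;> ring
    simp only [this]
    rw [Finset.sum_add_distrib, Finset.sum_const, Finset.sum_ite_eq]
    simp [mul_comm]
  rw [Finset.sum_congr rfl fun i _ => hrow i]
  rw [Finset.sum_const]
  simp
  ring

lemma suppsum' {U : Type*} [Fintype U] (p : U → ℝ) (hp0 : ∀ u, 0 ≤ p u)
    (hp1 : ∑ u, p u = 1) :
    ∑ u ∈ Finset.univ.filter (fun u => 0 < p u), p u = 1 := by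
  rw [← hp1]
  apply Finset.sum_filter_of_ne
  intro u _ h
  exact (hp0 u).lt_of_ne (Ne.symm h)

lemma totalmass' {U : Type*} [Fintype U] (p : U → ℝ) (hp1 : ∑ u, p u = 1) (k : ℕ) :
    ∑ v : Fin k → U, ∏ m, p (v m) = 1 := by
  rw [sum_prod_eq' k (fun _ x => p x)]
  simp [hp1]

lemma Eg' {U : Type*} [Fintype U] (p : U → ℝ) (hp0 : ∀ u, 0 ≤ p u)
    (hp1 : ∑ u, p u = 1) (k : ℕ) (hk : 0 < k) :
    ∑ v : Fin k → U, (∏ m, p (v m)) *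
      (∑ u ∈ Finset.univ.filter (fun u => 0 < p u), empDist v u * empDist v u / p u)
    = ((Finset.univ.filter fun u : U => 0 < p u).card : ℝ)/k + ((k:ℝ)-1)/k := by
  have hk' : (k:ℝ) ≠ 0 := Nat.cast_ne_zero.mpr hk.ne'
  simp only [Finset.mul_sum]
  rw [Finset.sum_comm]
  have key : ∀ u ∈ Finset.univ.filter (fun u => 0 < p u),
      ∑ v : Fin k → U, (∏ m, p (v m)) * (empDist v u * empDist v u / p u)
      = 1/k + ((k:ℝ)-1)/k * p u := by
    intro u hu
    have hpu : 0 < p u := (Finset.mem_filter.mp hu).2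
    have hterm : ∀ v : Fin k → U, (∏ m, p (v m)) * (empDist v u * empDist v u / p u)
        = ((∏ m, p (v m)) * (empDist v u * empDist v u)) / p u := fun v => by ring
    simp only [hterm]
    rw [← Finset.sum_div, momsq p hp1 k hk u]
    field_simp
  rw [Finset.sum_congr rfl key, Finset.sum_add_distrib, Finset.sum_const,
    ← Finset.mul_sum, suppsum' p hp0 hp1]
  simp
  ring

/-- If `X_1, …, X_k` are i.i.d. with common distribution `p` on the
finite set `U`, `p̂` is the empirical distribution and `U⁺ = {u : p_u > 0}`, then for
every `δ > 0` we have `P[d_KL(p̂, p) ≥ δ] ≤ |U⁺|/(k·δ)`.  (The probability of an event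
of samples is the total product weight `∏ i, p (v i)` of the tuples `v` in it.) -/
theorem stmt7 {U : Type*} [Fintype U]
    (p : U → ℝ) (hp0 : ∀ u, 0 ≤ p u) (hp1 : ∑ u, p u = 1)
    (k : ℕ) (hk : 0 < k) (δ : ℝ) (hδ : 0 < δ) :
    ∑ v ∈ Finset.univ.filter (fun v : Fin k → U =>
        δ ≤ ∑ u ∈ Finset.univ.filter (fun u => 0 < empDist v u),
          empDist v u * Real.log (empDist v u / p u)),
      ∏ i, p (v i) ≤
    ((Finset.univ.filter fun u : U => 0 < p u).card : ℝ) / (k * δ) := by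
  classical
  have hkR : (0:ℝ) < k := by exact_mod_cast hk
  set W : (Fin k → U) → ℝ := fun v => ∏ i, p (v i) with hWdef
  have hW0 : ∀ v, 0 ≤ W v := fun v => Finset.prod_nonneg fun i _ => hp0 _
  have hed0 : ∀ (v : Fin k → U) (u : U), 0 ≤ empDist v u := by
    intro v u
    exact div_nonneg (Nat.cast_nonneg _) (Nat.cast_nonneg _)
  set Up : Finset U := Finset.univ.filter (fun u => 0 < p u) with hUp
  set g : (Fin k → U) → ℝ :=
    fun v => (∑ u ∈ Up, empDist v u * empDist v u / p u) - 1 with hg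
  set f : (Fin k → U) → ℝ :=
    fun v => ∑ u ∈ Finset.univ.filter (fun u => 0 < empDist v u),
      empDist v u * Real.log (empDist v u / p u) with hf
  -- facts for v with positive weight
  have hpos : ∀ v : Fin k → U, 0 < W v → ∀ i, 0 < p (v i) := by
    intro v hv i
    rcases (hp0 (v i)).eq_or_lt with h | h
    · exfalso
      have : W v = 0 := Finset.prod_eq_zero (Finset.mem_univ i) h.symm
      exact hv.ne' this
    · exact h
  have hedpos : ∀ (v : Fin k → U) (u : U), 0 < W v → 0 < empDist v u → 0 < p u := by
    intro v u hv hed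
    have hne : (Finset.univ.filter fun i => v i = u).Nonempty := by
      rw [← Finset.card_pos]
      by_contra h
      push_neg at h
      interval_cases h' : (Finset.univ.filter fun i => v i = u).card
      · simp [empDist, h'] at hed
    obtain ⟨i, hi⟩ := hne
    have : v i = u := (Finset.mem_filter.mp hi).2
    exact this ▸ hpos v hv i
  have hsum1 : ∀ v : Fin k → U, 0 < W v → ∑ u ∈ Up, empDist v u = 1 := by
    intro v hv
    have hall : ∑ u : U, empDist v u = 1 := by
      unfold empDist
      rw [← Finset.sum_div]
      have : ∑ u : U, ((Finset.univ.filter fun i => v i = u).card : ℝ) = k := by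
        rw [← Nat.cast_sum]
        congr 1
        rw [← Finset.card_eq_sum_card_fiberwise (f := v) (fun i _ => Finset.mem_univ (v i))]
        simp
      rw [this]
      field_simp
    rw [← hall]
    apply Finset.sum_filter_of_ne
    intro u _ h
    exact hedpos v u hv ((hed0 v u).lt_of_ne (Ne.symm h))
  have hfg : ∀ v : Fin k → U, 0 < W v → f v ≤ g v := by
    intro v hv
    have step1 : f v ≤ ∑ u ∈ Finset.univ.filter (fun u => 0 < empDist v u),
        (empDist v u * empDist v u / p u - empDist v u) := by
      apply Finset.sum_le_sum
      intro u hu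
      have hph : 0 < empDist v u := (Finset.mem_filter.mp hu).2
      have hpu : 0 < p u := hedpos v u hv hph
      have hlog : Real.log (empDist v u / p u) ≤ empDist v u / p u - 1 :=
        Real.log_le_sub_one_of_pos (div_pos hph hpu)
      calc empDist v u * Real.log (empDist v u / p u)
          ≤ empDist v u * (empDist v u / p u - 1) :=
            mul_le_mul_of_nonneg_left hlog hph.le
        _ = empDist v u * empDist v u / p u - empDist v u := by ring
    have step2 : ∑ u ∈ Finset.univ.filter (fun u => 0 < empDist v u),
        (empDist v u * empDist v u / p u - empDist v u) ≤
        ∑ u ∈ Up, (empDist v u * empDist v u / p u - empDist v u) := by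
      apply Finset.sum_le_sum_of_subset_of_nonneg
      · intro u hu
        rw [Finset.mem_filter] at hu ⊢
        exact ⟨hu.1, hedpos v u hv hu.2⟩
      · intro u _ hu2
        have : ¬ 0 < empDist v u := by
          intro h
          exact hu2 (Finset.mem_filter.mpr ⟨Finset.mem_univ u, h⟩)
        have h0 : empDist v u = 0 := le_antisymm (not_lt.mp this) (hed0 v u)
        simp [h0]
    have step3 : ∑ u ∈ Up, (empDist v u * empDist v u / p u - empDist v u) = g v := by
      rw [Finset.sum_sub_distrib, hsum1 v hv]
    exact step1.trans (step2.trans_eq step3)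
  have hg0 : ∀ v : Fin k → U, 0 < W v → 0 ≤ g v := by
    intro v hv
    have h1 : ∑ u ∈ Up, (2 * empDist v u - p u) ≤
        ∑ u ∈ Up, empDist v u * empDist v u / p u := by
      apply Finset.sum_le_sum
      intro u hu
      have hpu : 0 < p u := (Finset.mem_filter.mp hu).2
      have heq : empDist v u * empDist v u / p u - (2 * empDist v u - p u)
          = (empDist v u - p u)^2 / p u := by
        field_simp
        ring
      nlinarith [div_nonneg (sq_nonneg (empDist v u - p u)) hpu.le, heq]
    have h2 : ∑ u ∈ Up, (2 * empDist v u - p u) = 1 := by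
      rw [Finset.sum_sub_distrib, ← Finset.mul_sum, hsum1 v hv, suppsum' p hp0 hp1]
      ring
    simp only [hg]
    linarith
  -- Markov chain
  set A : Finset (Fin k → U) := Finset.univ.filter (fun v : Fin k → U => δ ≤ f v) with hA
  have step1 : δ * ∑ v ∈ A, W v ≤ ∑ v ∈ A, W v * g v := by
    rw [Finset.mul_sum]
    apply Finset.sum_le_sum
    intro v hv
    rcases (hW0 v).eq_or_lt with h | h
    · rw [← h]; simp
    · have hδf : δ ≤ f v := (Finset.mem_filter.mp hv).2
      have : δ ≤ g v := le_trans hδf (hfg v h)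
      calc δ * W v = W v * δ := mul_comm _ _
        _ ≤ W v * g v := mul_le_mul_of_nonneg_left this (hW0 v)
  have step2 : ∑ v ∈ A, W v * g v ≤ ∑ v : Fin k → U, W v * g v := by
    apply Finset.sum_le_sum_of_subset_of_nonneg (Finset.subset_univ _)
    intro v _ _
    rcases (hW0 v).eq_or_lt with h | h
    · rw [← h]; simp
    · exact mul_nonneg (hW0 v) (hg0 v h)
  have step3 : ∑ v : Fin k → U, W v * g v
      = ((Up.card : ℝ)/k + ((k:ℝ)-1)/k) - 1 := by
    simp only [hg, mul_sub, mul_one]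
    rw [Finset.sum_sub_distrib, totalmass' p hp1 k, Eg' p hp0 hp1 k hk]
  have hfinal : δ * ∑ v ∈ A, W v ≤ (Up.card : ℝ)/k := by
    have : ((Up.card : ℝ)/k + ((k:ℝ)-1)/k) - 1 ≤ (Up.card : ℝ)/k := by
      have h1 : ((k:ℝ)-1)/k ≤ 1 := by
        rw [div_le_one hkR]
        linarith
      linarith
    linarith
  have hgoal : ∑ v ∈ A, W v ≤ (Up.card : ℝ) / (k * δ) := by
    rw [← div_div]
    rw [le_div_iff₀ hδ]
    linarith [hfinal]
  exact hgoal
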